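/- arXiv:2509.19683 — 2 statements merged into one kernel-verified Lean document; each statement's English description precedes it below -/
import Mathlib

section
/- Let α(h) denote the vertex cover number of a perfect binary tree of height h. Then for all h > 2, α(h) = min{1 + 2·α(h-1), 2 + 4·α(h-2)}. -/
/-- The perfect binary tree of height `h`, on vertex set `Fin (2^(h+1) - 1)`
with heap indexing: the children of vertex `i` are `2*i+1` and `2*i+2`. -/
def perfectBinaryTree (h : ℕ) : SimpleGraph (Fin (2 ^ (h + 1) - 1)) :=
  SimpleGraph.fromRel (fun i j => (j : ℕ) = 2 * (i : ℕ) + 1 ∨ (j : ℕ) = 2 * (i : ℕ) + 2)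

/-- The height of a vertex (in heap indexing) is `log₂ (v+1)`. -/
def heapHeight {n : ℕ} (v : Fin n) : ℕ := Nat.log 2 ((v : ℕ) + 1)

variable {V : Type*}

/-- A vertex cover of a graph: a set of vertices meeting every edge. -/
def SimpleGraph.IsVertexCover' (G : SimpleGraph V) (C : Finset V) : Prop :=
  ∀ ⦃u v : V⦄, G.Adj u v → u ∈ C ∨ v ∈ C

/-- A minimal vertex cover: no proper subset is a vertex cover. -/
def SimpleGraph.IsMinimalVertexCover (G : SimpleGraph V) (C : Finset V) : Prop :=
  G.IsVertexCover' C ∧ ∀ D : Finset V, D ⊂ C → ¬ G.IsVertexCover' D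

/-- The number of minimal vertex covers of a graph. -/
noncomputable def SimpleGraph.numMinimalVertexCovers (G : SimpleGraph V) : ℕ :=
  {C : Finset V | G.IsMinimalVertexCover C}.ncard

/-- The vertex cover number: smallest cardinality of a vertex cover. -/
noncomputable def SimpleGraph.vertexCoverNumber (G : SimpleGraph V) : ℕ :=
  sInf {k | ∃ C : Finset V, G.IsVertexCover' C ∧ C.card = k}

/-- An independent set: no two of its vertices are adjacent. -/
def SimpleGraph.IsIndepSet' (G : SimpleGraph V) (W : Finset V) : Prop :=
  ∀ u ∈ W, ∀ v ∈ W, ¬ G.Adj u v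

/-- A maximal independent set. -/
def SimpleGraph.IsMaximalIndepSet (G : SimpleGraph V) (W : Finset V) : Prop :=
  G.IsIndepSet' W ∧ ∀ D : Finset V, W ⊂ D → ¬ G.IsIndepSet' D

/-- The independence number: largest cardinality of an independent set. -/
noncomputable def SimpleGraph.indepNumber (G : SimpleGraph V) : ℕ :=
  sSup {k | ∃ W : Finset V, G.IsIndepSet' W ∧ W.card = k}

/-- The minimum size of a maximal independent set. -/
noncomputable def SimpleGraph.minMaximalIndepSetSize (G : SimpleGraph V) : ℕ :=
  sInf {k | ∃ W : Finset V, G.IsMaximalIndepSet W ∧ W.card = k}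

/-- The matching number: largest cardinality of a set of pairwise disjoint edges. -/
noncomputable def SimpleGraph.matchingNumber (G : SimpleGraph V) : ℕ :=
  sSup {k | ∃ M : Finset (Sym2 V), (↑M : Set (Sym2 V)) ⊆ G.edgeSet ∧
    ((↑M : Set (Sym2 V)).Pairwise fun e f => ∀ v : V, v ∈ e → v ∉ f) ∧ M.card = k}



private def lvl (m : ℕ) : ℕ := Nat.log 2 (m + 1)

private lemma lvl_left (m : ℕ) : lvl (2*m+1) = lvl m + 1 := by
  unfold lvl
  have h : 2*m+1+1 = (m+1)*2 := by ring
  rw [h, Nat.log_mul_base (by norm_num) (Nat.succ_ne_zero m)]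

private lemma lvl_right (m : ℕ) : lvl (2*m+2) = lvl m + 1 := by
  unfold lvl
  apply Nat.log_eq_of_pow_le_of_lt_pow
  · have h1 : 2 ^ Nat.log 2 (m+1) ≤ m+1 := Nat.pow_log_le_self 2 (Nat.succ_ne_zero m)
    have : 2 ^ (Nat.log 2 (m+1) + 1) = 2 * 2 ^ (Nat.log 2 (m+1)) := by ring
    omega
  · have h1 : m+1 < 2 ^ (Nat.log 2 (m+1) + 1) := Nat.lt_pow_succ_log_self (by norm_num) (m+1)
    have : 2 ^ (Nat.log 2 (m+1) + 1 + 1) = 2 * 2 ^ (Nat.log 2 (m+1) + 1) := by ring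
    omega

private lemma lvl_le_of_lt {m h : ℕ} (hm : m < 2^(h+1)-1) : lvl m ≤ h := by
  have h0 : (1:ℕ) ≤ 2^(h+1) := Nat.one_le_two_pow
  have h1 : m + 1 < 2^(h+1) := by omega
  have h2 : Nat.log 2 (m+1) < h + 1 := Nat.log_lt_of_lt_pow (Nat.succ_ne_zero m) h1
  unfold lvl; omega

private def pbtCover (h : ℕ) : Finset (Fin (2^(h+1)-1)) :=
  Finset.univ.filter (fun v => (h - lvl (v:ℕ)) % 2 = 1)

private lemma pbtCover_mem_iff {h : ℕ} {v : Fin (2^(h+1)-1)} :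
    v ∈ pbtCover h ↔ (h - lvl (v:ℕ)) % 2 = 1 := by
  simp [pbtCover]

private lemma pbtCover_isCover (h : ℕ) :
    (perfectBinaryTree h).IsVertexCover' (pbtCover h) := by
  intro u v hadj
  rw [perfectBinaryTree, SimpleGraph.fromRel_adj] at hadj
  obtain ⟨hne, hrel⟩ := hadj
  have key : ∀ p c : Fin (2^(h+1)-1), ((c:ℕ) = 2*(p:ℕ)+1 ∨ (c:ℕ) = 2*(p:ℕ)+2) →
      p ∈ pbtCover h ∨ c ∈ pbtCover h := by
    intro p c hc
    have hcl : lvl (c:ℕ) = lvl (p:ℕ) + 1 := by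
      rcases hc with hc | hc <;> rw [hc]
      · exact lvl_left _
      · exact lvl_right _
    have hcb : lvl (c:ℕ) ≤ h := lvl_le_of_lt c.isLt
    rw [pbtCover_mem_iff, pbtCover_mem_iff]
    omega
  rcases hrel with hc | hc
  · exact key u v hc
  · exact (key v u hc).symm

private lemma child_lt {h : ℕ} {v : Fin (2^(h+1)-1)} (hv : v ∈ pbtCover h) :
    2*(v:ℕ)+1 < 2^(h+1)-1 := by
  have h1 := pbtCover_mem_iff.mp hv
  have h2 : lvl (v:ℕ) < h := by omega
  have h3 : (v:ℕ) + 1 < 2 ^ (lvl (v:ℕ) + 1) := by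
    have := Nat.lt_pow_succ_log_self (b:=2) (by norm_num) ((v:ℕ)+1)
    unfold lvl; omega
  have h4 : 2 ^ (lvl (v:ℕ) + 1) ≤ 2 ^ h := Nat.pow_le_pow_right (by norm_num) (by omega)
  have h5 : (2:ℕ)^(h+1) = 2 * 2^h := by ring
  have h6 : (1:ℕ) ≤ 2^h := Nat.one_le_two_pow
  omega

private def childF {h : ℕ} (v : Fin (2^(h+1)-1)) : Fin (2^(h+1)-1) :=
  if hlt : 2*(v:ℕ)+1 < 2^(h+1)-1 then ⟨2*(v:ℕ)+1, hlt⟩ else v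

private lemma childF_val {h : ℕ} {v : Fin (2^(h+1)-1)} (hv : v ∈ pbtCover h) :
    ((childF v : Fin (2^(h+1)-1)) : ℕ) = 2*(v:ℕ)+1 := by
  unfold childF
  rw [dif_pos (child_lt hv)]

private lemma childF_parity {h : ℕ} {v : Fin (2^(h+1)-1)} (hv : v ∈ pbtCover h) :
    (h - lvl ((childF v : Fin (2^(h+1)-1)) : ℕ)) % 2 = 0 := by
  have h1 := pbtCover_mem_iff.mp hv
  have h2 : lvl ((childF v : Fin (2^(h+1)-1)) : ℕ) = lvl (v:ℕ) + 1 := by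
    rw [childF_val hv]; exact lvl_left _
  omega

private lemma ne_childF {h : ℕ} {v w : Fin (2^(h+1)-1)} (hv : v ∈ pbtCover h)
    (hw : w ∈ pbtCover h) : v ≠ childF w := by
  intro heq
  have h1 := pbtCover_mem_iff.mp hv
  have h2 := childF_parity hw
  rw [← heq] at h2
  omega

private def pbtMatching (h : ℕ) : Finset (Sym2 (Fin (2^(h+1)-1))) :=
  (pbtCover h).image (fun v => s(v, childF v))

private lemma pbtMatching_card (h : ℕ) : (pbtMatching h).card = (pbtCover h).card := by
  apply Finset.card_image_of_injOn
  intro v hv w hw heq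
  rw [Finset.mem_coe] at hv hw
  rcases Sym2.eq_iff.mp heq with ⟨h1, _⟩ | ⟨h1, _⟩
  · exact h1
  · exact absurd h1 (ne_childF hv hw)

private lemma pbtMatching_subset (h : ℕ) :
    (↑(pbtMatching h) : Set (Sym2 (Fin (2^(h+1)-1)))) ⊆ (perfectBinaryTree h).edgeSet := by
  intro e he
  rw [Finset.mem_coe, pbtMatching, Finset.mem_image] at he
  obtain ⟨v, hv, rfl⟩ := he
  rw [SimpleGraph.mem_edgeSet, perfectBinaryTree, SimpleGraph.fromRel_adj]
  refine ⟨?_, Or.inl (Or.inl (childF_val hv))⟩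
  intro heq
  have := childF_val hv
  rw [← heq] at this
  omega

private lemma pbtMatching_pairwise (h : ℕ) :
    (↑(pbtMatching h) : Set (Sym2 (Fin (2^(h+1)-1)))).Pairwise
      fun e f => ∀ x, x ∈ e → x ∉ f := by
  intro e he f hf hne x hxe hxf
  rw [Finset.mem_coe, pbtMatching, Finset.mem_image] at he hf
  obtain ⟨v, hv, rfl⟩ := he
  obtain ⟨w, hw, rfl⟩ := hf
  have hvw : v ≠ w := fun h' => hne (by rw [h'])
  rw [Sym2.mem_iff] at hxe hxf
  rcases hxe with rfl | rfl <;> rcases hxf with h1 | h1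
  · exact hvw h1
  · exact ne_childF hv hw h1
  · exact ne_childF hw hv h1.symm
  · apply hvw
    have e1 := childF_val hv
    have e2 := childF_val hw
    rw [h1, e2] at e1
    exact Fin.val_injective (by omega)

private lemma matching_le_cover {W : Type*} [DecidableEq W] [Nonempty W] (G : SimpleGraph W)
    (M : Finset (Sym2 W)) (hM : (↑M : Set (Sym2 W)) ⊆ G.edgeSet)
    (hd : (↑M : Set (Sym2 W)).Pairwise fun e f => ∀ v, v ∈ e → v ∉ f)
    (C : Finset W) (hC : G.IsVertexCover' C) : M.card ≤ C.card := by
  classical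
  have hex : ∀ e : Sym2 W, ∃ x, e ∈ M → x ∈ C ∧ x ∈ e := by
    intro e
    by_cases he : e ∈ M
    · have hE : e ∈ G.edgeSet := hM he
      induction e using Sym2.ind with
      | _ u v =>
        rw [SimpleGraph.mem_edgeSet] at hE
        rcases hC hE with h1 | h1
        · exact ⟨u, fun _ => ⟨h1, Sym2.mem_mk_left u v⟩⟩
        · exact ⟨v, fun _ => ⟨h1, Sym2.mem_mk_right u v⟩⟩
    · exact ⟨Classical.arbitrary W, fun h' => absurd h' he⟩
  choose f hf using hex
  have hf1 : ∀ e ∈ M, f e ∈ C := fun e he => (hf e he).1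
  have hf2 : ∀ e ∈ M, f e ∈ e := fun e he => (hf e he).2
  apply Finset.card_le_card_of_injOn f (fun e he => hf1 e he)
  intro e he e' he' hfe
  by_contra hne
  exact hd he he' hne (f e) (hf2 e (Finset.mem_coe.mp he))
    (hfe ▸ hf2 e' (Finset.mem_coe.mp he'))

private def cnt (h : ℕ) : ℕ :=
  ((Finset.range (2^(h+1)-1)).filter (fun m => (h - lvl m) % 2 = 1)).card

private lemma pbtCover_card (h : ℕ) : (pbtCover h).card = cnt h := by
  unfold cnt
  rw [← Nat.Iio_eq_range, ← Fin.map_valEmbedding_univ, Finset.filter_map, Finset.card_map]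
  rfl

private lemma cnt_step (h : ℕ) : cnt (h + 2) = 2^(h+1) + cnt h := by
  classical
  have pA : (1:ℕ) ≤ 2^(h+1) := Nat.one_le_two_pow
  have pB : (2:ℕ)^(h+2) = 2 * 2^(h+1) := by ring
  have pC : (2:ℕ)^(h+2+1) = 4 * 2^(h+1) := by ring
  have hsplit : Finset.range (2^(h+2+1)-1) =
      Finset.range (2^(h+1)-1) ∪ Finset.Ico (2^(h+1)-1) (2^(h+2+1)-1) := by
    rw [Finset.range_eq_Ico, Finset.range_eq_Ico]
    exact (Finset.Ico_union_Ico_eq_Ico (by omega) (by omega)).symm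
  have hdisj : Disjoint
      ((Finset.range (2^(h+1)-1)).filter (fun m => (h + 2 - lvl m) % 2 = 1))
      ((Finset.Ico (2^(h+1)-1) (2^(h+2+1)-1)).filter (fun m => (h + 2 - lvl m) % 2 = 1)) := by
    rw [Finset.disjoint_left]
    intro m hm hm'
    have := Finset.mem_range.mp (Finset.mem_of_mem_filter m hm)
    have := (Finset.mem_Ico.mp (Finset.mem_of_mem_filter m hm')).1
    omega
  have hlow : ((Finset.range (2^(h+1)-1)).filter (fun m => (h + 2 - lvl m) % 2 = 1)).card
      = cnt h := by
    unfold cnt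
    congr 1
    apply Finset.filter_congr
    intro m hm
    have := lvl_le_of_lt (Finset.mem_range.mp hm)
    constructor <;> intro <;> omega
  have hhigh : ((Finset.Ico (2^(h+1)-1) (2^(h+2+1)-1)).filter
      (fun m => (h + 2 - lvl m) % 2 = 1)) = Finset.Ico (2^(h+1)-1) (2^(h+2)-1) := by
    ext m
    rw [Finset.mem_filter, Finset.mem_Ico, Finset.mem_Ico]
    constructor
    · rintro ⟨⟨h1, h2⟩, h3⟩
      refine ⟨h1, ?_⟩
      have l1 : h + 1 ≤ lvl m := by
        have hm1 : 2^(h+1) ≤ m + 1 := by omega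
        exact (Nat.le_log_iff_pow_le (by norm_num) (by omega)).mpr hm1
      have l2 : lvl m ≤ h + 2 := lvl_le_of_lt h2
      have l3 : lvl m = h + 1 := by omega
      have l4 : m + 1 < 2 ^ (lvl m + 1) := Nat.lt_pow_succ_log_self (by norm_num) (m+1)
      rw [l3] at l4
      omega
    · rintro ⟨h1, h2⟩
      have l3 : lvl m = h + 1 := by
        unfold lvl
        exact Nat.log_eq_of_pow_le_of_lt_pow (by omega) (by omega)
      exact ⟨⟨h1, by omega⟩, by rw [l3]; omega⟩
  calc cnt (h+2) = ((Finset.range (2^(h+1)-1)).filter (fun m => (h + 2 - lvl m) % 2 = 1)).card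
        + ((Finset.Ico (2^(h+1)-1) (2^(h+2+1)-1)).filter (fun m => (h + 2 - lvl m) % 2 = 1)).card := by
        unfold cnt
        rw [hsplit, Finset.filter_union, Finset.card_union_of_disjoint hdisj]
    _ = 2^(h+1) + cnt h := by
        rw [hlow, hhigh, Nat.card_Ico]
        omega

private lemma lvl0 : lvl 0 = 0 := Nat.log_eq_of_pow_le_of_lt_pow (by norm_num) (by norm_num)
private lemma lvl1 : lvl 1 = 1 := Nat.log_eq_of_pow_le_of_lt_pow (by norm_num) (by norm_num)
private lemma lvl2 : lvl 2 = 1 := Nat.log_eq_of_pow_le_of_lt_pow (by norm_num) (by norm_num)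

private lemma cnt0 : cnt 0 = 0 := by
  unfold cnt
  convert Finset.card_empty
  ext m
  simp only [Finset.mem_filter, Finset.mem_range, Finset.notMem_empty, iff_false, not_and]
  intro hm
  norm_num at hm
  obtain rfl : m = 0 := by omega
  rw [lvl0]
  decide

private lemma cnt1 : cnt 1 = 1 := by
  unfold cnt
  have heq : ((Finset.range (2^(1+1)-1)).filter (fun m => (1 - lvl m) % 2 = 1)) = {0} := by
    ext m
    simp only [Finset.mem_filter, Finset.mem_range, Finset.mem_singleton]
    constructor
    · rintro ⟨hm, hc⟩
      norm_num at hm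
      interval_cases m
      · rfl
      · rw [lvl1] at hc; omega
      · rw [lvl2] at hc; omega
    · rintro rfl
      rw [lvl0]
      exact ⟨by norm_num, by norm_num⟩
  rw [heq, Finset.card_singleton]

private lemma cnt3 (h : ℕ) : 3 * cnt h + 2 = 2^(h+1) + h % 2 := by
  induction h using Nat.strong_induction_on with
  | _ h ih =>
    match h with
    | 0 => norm_num [cnt0]
    | 1 => norm_num [cnt1]
    | (m+2) =>
      have hm := ih m (by omega)
      rw [cnt_step]
      have : (2:ℕ)^(m+2+1) = 4 * 2^(m+1) := by ring
      omega

private lemma vcn_eq (h : ℕ) : (perfectBinaryTree h).vertexCoverNumber = cnt h := by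
  classical
  have hmem : cnt h ∈ {k | ∃ C : Finset (Fin (2^(h+1)-1)),
      (perfectBinaryTree h).IsVertexCover' C ∧ C.card = k} :=
    ⟨pbtCover h, pbtCover_isCover h, pbtCover_card h⟩
  have hne : (1:ℕ) ≤ 2^(h+1) - 1 := by
    have : (2:ℕ) ≤ 2^(h+1) := by
      calc (2:ℕ) = 2^1 := rfl
        _ ≤ 2^(h+1) := Nat.pow_le_pow_right (by norm_num) (by omega)
    omega
  have : Nonempty (Fin (2^(h+1)-1)) := ⟨⟨0, by omega⟩⟩
  unfold SimpleGraph.vertexCoverNumber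
  apply le_antisymm (Nat.sInf_le hmem)
  obtain ⟨C, hC, hcard⟩ := Nat.sInf_mem (⟨_, hmem⟩ : Set.Nonempty _)
  rw [← hcard]
  calc cnt h = (pbtCover h).card := (pbtCover_card h).symm
    _ = (pbtMatching h).card := (pbtMatching_card h).symm
    _ ≤ C.card := matching_le_cover _ _ (pbtMatching_subset h) (pbtMatching_pairwise h) C hC

/-- Recurrence for the vertex cover number of perfect binary trees. -/
theorem vertexCoverNumber_perfectBinaryTree_recurrence (h : ℕ) (hh : 2 < h) :
    (perfectBinaryTree h).vertexCoverNumber =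
      min (1 + 2 * (perfectBinaryTree (h - 1)).vertexCoverNumber)
        (2 + 4 * (perfectBinaryTree (h - 2)).vertexCoverNumber) := by
  obtain ⟨m, rfl⟩ : ∃ m, h = m + 3 := ⟨h - 3, by omega⟩
  rw [vcn_eq, vcn_eq, vcn_eq]
  show cnt (m+3) = min (1 + 2 * cnt (m+2)) (2 + 4 * cnt (m+1))
  have e1 := cnt3 (m+3)
  have e2 := cnt3 (m+2)
  have e3 := cnt3 (m+1)
  have p1 : (2:ℕ)^(m+3+1) = 4 * 2^(m+1+1) := by ring
  have p2 : (2:ℕ)^(m+2+1) = 2 * 2^(m+1+1) := by ring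
  have p3 : (4:ℕ) ≤ 2^(m+1+1) := by
    calc (4:ℕ) = 2^2 := rfl
      _ ≤ 2^(m+1+1) := Nat.pow_le_pow_right (by norm_num) (by omega)
  omega
end

section
/- Let T be a perfect binary tree of height h = 3m + 1 with m ≥ 0. Then the minimum size of a maximal independent set of T equals (8^(m+1) - 1)/7. -/
variable {V : Type*}

namespace PBTaux

/-- left-child-subtree embedding on heap indices -/
def lnat (j : ℕ) : ℕ := j + 2 ^ Nat.log 2 (j + 1)
/-- right-child-subtree embedding on heap indices -/
def rnat (j : ℕ) : ℕ := j + 2 ^ (Nat.log 2 (j + 1) + 1)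

lemma log_bounds (j : ℕ) : 2 ^ Nat.log 2 (j+1) ≤ j + 1 ∧ j + 1 < 2 ^ (Nat.log 2 (j+1) + 1) :=
  ⟨Nat.pow_log_le_self 2 (Nat.succ_ne_zero j), Nat.lt_pow_succ_log_self one_lt_two (j+1)⟩

lemma log_lnat (j : ℕ) : Nat.log 2 (lnat j + 1) = Nat.log 2 (j+1) + 1 := by
  obtain ⟨h1, h2⟩ := log_bounds j
  apply Nat.log_eq_of_pow_le_of_lt_pow
  · unfold lnat; rw [pow_succ]; omega
  · unfold lnat
    have : (2:ℕ) ^ (Nat.log 2 (j+1) + 1 + 1) = 2 ^ (Nat.log 2 (j+1) + 1) + 2 ^ (Nat.log 2 (j+1) + 1) := by ring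
    have h3 : (2:ℕ) ^ Nat.log 2 (j+1) ≤ 2 ^ (Nat.log 2 (j+1) + 1) := Nat.pow_le_pow_right (by norm_num) (by omega)
    omega

lemma log_rnat (j : ℕ) : Nat.log 2 (rnat j + 1) = Nat.log 2 (j+1) + 1 := by
  obtain ⟨h1, h2⟩ := log_bounds j
  apply Nat.log_eq_of_pow_le_of_lt_pow
  · unfold rnat; omega
  · unfold rnat
    have : (2:ℕ) ^ (Nat.log 2 (j+1) + 1 + 1) = 2 ^ (Nat.log 2 (j+1) + 1) + 2 ^ (Nat.log 2 (j+1) + 1) := by ring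
    omega

lemma lnat_lt_rnat_bound (j : ℕ) :
    lnat j + 1 < 2 ^ Nat.log 2 (j+1) + 2 ^ Nat.log 2 (j+1) + 2 ^ Nat.log 2 (j+1) ∧
    2 ^ Nat.log 2 (j+1) + 2 ^ Nat.log 2 (j+1) + 2 ^ Nat.log 2 (j+1) ≤ rnat j + 1 := by
  obtain ⟨h1, h2⟩ := log_bounds j
  have hp : (2:ℕ) ^ (Nat.log 2 (j+1) + 1) = 2 ^ Nat.log 2 (j+1) + 2 ^ Nat.log 2 (j+1) := by ring
  unfold lnat rnat; omega

lemma lnat_inj : Function.Injective lnat := by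
  intro a b hab
  have h1 := log_lnat a; have h2 := log_lnat b
  rw [hab] at h1
  have hk : Nat.log 2 (a+1) = Nat.log 2 (b+1) := by omega
  unfold lnat at hab; rw [hk] at hab; omega

lemma rnat_inj : Function.Injective rnat := by
  intro a b hab
  have h1 := log_rnat a; have h2 := log_rnat b
  rw [hab] at h1
  have hk : Nat.log 2 (a+1) = Nat.log 2 (b+1) := by omega
  unfold rnat at hab; rw [hk] at hab; omega

lemma lnat_ne_rnat (a b : ℕ) : lnat a ≠ rnat b := by
  intro hab
  have la := log_lnat a; have lb := log_rnat b
  rw [hab] at la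
  have hk : Nat.log 2 (a+1) = Nat.log 2 (b+1) := by omega
  obtain ⟨ha1, _⟩ := lnat_lt_rnat_bound a
  obtain ⟨_, hb2⟩ := lnat_lt_rnat_bound b
  rw [hk] at ha1
  omega

lemma lnat_pos (j : ℕ) : 1 ≤ lnat j := by unfold lnat; have := Nat.one_le_two_pow (n := Nat.log 2 (j+1)); omega
lemma rnat_pos (j : ℕ) : 1 ≤ rnat j := by unfold rnat; have := Nat.one_le_two_pow (n := Nat.log 2 (j+1)+1); omega

lemma log_le_of_lt {j h : ℕ} (hj : j + 1 < 2 ^ (h+1)) : Nat.log 2 (j+1) ≤ h := by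
  by_contra hc
  have : 2 ^ (h+1) ≤ 2 ^ Nat.log 2 (j+1) := Nat.pow_le_pow_right (by norm_num) (by omega)
  have := (log_bounds j).1
  omega

lemma lnat_bound {j h : ℕ} (hj : j < 2 ^ (h+1) - 1) : lnat j < 2 ^ (h+2) - 1 := by
  have h2 : (2:ℕ) ^ (h+1) ≥ 1 := Nat.one_le_two_pow
  have hj' : j + 1 < 2 ^ (h+1) := by omega
  have hk := log_le_of_lt hj'
  have : (2:ℕ) ^ Nat.log 2 (j+1) ≤ 2 ^ (h+1) := Nat.pow_le_pow_right (by norm_num) (by omega)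
  have hpow : (2:ℕ)^(h+2) = 2^(h+1) + 2^(h+1) := by ring
  unfold lnat; omega

lemma rnat_bound {j h : ℕ} (hj : j < 2 ^ (h+1) - 1) : rnat j < 2 ^ (h+2) - 1 := by
  have h2 : (2:ℕ) ^ (h+1) ≥ 1 := Nat.one_le_two_pow
  have hj' : j + 1 < 2 ^ (h+1) := by omega
  have hk := log_le_of_lt hj'
  have : (2:ℕ) ^ (Nat.log 2 (j+1) + 1) ≤ 2 ^ (h+1) := Nat.pow_le_pow_right (by norm_num) (by omega)
  have hpow : (2:ℕ)^(h+2) = 2^(h+1) + 2^(h+1) := by ring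
  unfold rnat; omega

lemma lnat_zero : lnat 0 = 1 := by simp [lnat]
lemma rnat_zero : rnat 0 = 2 := by simp [rnat]

lemma log_two_mul_add_two (j : ℕ) : Nat.log 2 (2*j+2) = Nat.log 2 (j+1) + 1 := by
  have := Nat.log_mul_base (b := 2) (n := j+1) one_lt_two (Nat.succ_ne_zero j)
  have he : (j+1) * 2 = 2*j+2 := by ring
  rw [he] at this; exact this

lemma log_two_mul_add_three (j : ℕ) : Nat.log 2 (2*j+3) = Nat.log 2 (j+1) + 1 := by
  obtain ⟨h1, h2⟩ := log_bounds j
  apply Nat.log_eq_of_pow_le_of_lt_pow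
  · rw [pow_succ]; omega
  · have : (2:ℕ) ^ (Nat.log 2 (j+1) + 1 + 1) = 4 * 2 ^ Nat.log 2 (j+1) := by ring
    rw [pow_succ] at h2
    omega

lemma lnat_left (j : ℕ) : lnat (2*j+1) = 2 * lnat j + 1 := by
  unfold lnat
  have : 2*j+1+1 = 2*j+2 := by ring
  rw [this, log_two_mul_add_two, pow_succ]; ring

lemma lnat_right (j : ℕ) : lnat (2*j+2) = 2 * lnat j + 2 := by
  unfold lnat
  rw [show 2*j+2+1 = 2*j+3 by ring, log_two_mul_add_three, pow_succ]; ring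

lemma rnat_left (j : ℕ) : rnat (2*j+1) = 2 * rnat j + 1 := by
  unfold rnat
  rw [show 2*j+1+1 = 2*j+2 by ring, log_two_mul_add_two, pow_succ, pow_succ]; ring

lemma rnat_right (j : ℕ) : rnat (2*j+2) = 2 * rnat j + 2 := by
  unfold rnat
  rw [show 2*j+2+1 = 2*j+3 by ring, log_two_mul_add_three, pow_succ, pow_succ]; ring

lemma lnat_or_rnat {v h : ℕ} (hv1 : 1 ≤ v) (hv2 : v < 2 ^ (h+2) - 1) :
    (∃ j < 2 ^ (h+1) - 1, lnat j = v) ∨ (∃ j < 2 ^ (h+1) - 1, rnat j = v) := by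
  obtain ⟨hb1, hb2⟩ := log_bounds v
  have hK1 : 1 ≤ Nat.log 2 (v+1) := by
    by_contra hc
    have h0 : Nat.log 2 (v+1) = 0 := by omega
    rw [h0] at hb2
    simp at hb2
    omega
  obtain ⟨K', hK⟩ : ∃ K', Nat.log 2 (v+1) = K' + 1 :=
    ⟨Nat.log 2 (v+1) - 1, by omega⟩
  rw [hK] at hb1 hb2
  have hKh : K' + 1 ≤ h + 1 := by
    have hv2' : v + 1 < 2 ^ (h+1+1) := by
      have : (2:ℕ) ^ (h+1+1) = 2 ^ (h+2) := by ring
      omega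
    have := log_le_of_lt (h := h+1) (j := v) hv2'
    omega
  have hpow : (2:ℕ) ^ (K'+1) = 2 ^ K' + 2 ^ K' := by ring
  have hpowh : (2:ℕ) ^ (K'+1) ≤ 2 ^ (h+1) := Nat.pow_le_pow_right (by norm_num) hKh
  by_cases hc : v + 1 < 2 ^ (K'+1) + 2 ^ K'
  · left
    refine ⟨v - 2 ^ K', by omega, ?_⟩
    have hlog : Nat.log 2 (v - 2 ^ K' + 1) = K' := by
      apply Nat.log_eq_of_pow_le_of_lt_pow <;> omega
    unfold lnat; rw [hlog]; omega
  · right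
    refine ⟨v - 2 ^ (K'+1), by omega, ?_⟩
    have hlog : Nat.log 2 (v - 2 ^ (K'+1) + 1) = K' := by
      apply Nat.log_eq_of_pow_le_of_lt_pow
      · omega
      · have : (2:ℕ)^(K'+1+1) = 2^(K'+1) + 2^(K'+1) := by ring
        omega
    unfold rnat; rw [hlog]; omega


abbrev NV (h : ℕ) := Fin (2 ^ (h + 1) - 1)

lemma nv_pos (h : ℕ) : 0 < 2 ^ (h + 1) - 1 := by
  have : (2:ℕ) ≤ 2 ^ (h+1) := by
    calc (2:ℕ) = 2^1 := rfl
    _ ≤ 2^(h+1) := Nat.pow_le_pow_right (by norm_num) (by omega)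
  omega

def root (h : ℕ) : NV h := ⟨0, nv_pos h⟩

lemma adj_iff {h : ℕ} (i j : NV h) :
    (perfectBinaryTree h).Adj i j ↔
      ((j : ℕ) = 2 * i + 1 ∨ (j : ℕ) = 2 * i + 2 ∨ (i : ℕ) = 2 * j + 1 ∨ (i : ℕ) = 2 * j + 2) := by
  constructor
  · rintro ⟨hne, hrel | hrel⟩ <;> tauto
  · intro hrel
    have hne : i ≠ j := by
      intro he; subst he; omega
    exact ⟨hne, by tauto⟩

noncomputable def Lf (h : ℕ) : NV h ↪ NV (h+1) :=
  ⟨fun j => ⟨lnat j, lnat_bound j.isLt⟩, by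
    intro a b hab
    have : lnat a = lnat b := congrArg Fin.val hab
    exact Fin.val_injective (lnat_inj this)⟩

noncomputable def Rf (h : ℕ) : NV h ↪ NV (h+1) :=
  ⟨fun j => ⟨rnat j, rnat_bound j.isLt⟩, by
    intro a b hab
    have : rnat a = rnat b := congrArg Fin.val hab
    exact Fin.val_injective (rnat_inj this)⟩

@[simp] lemma Lf_val {h : ℕ} (a : NV h) : (Lf h a : ℕ) = lnat a := rfl
@[simp] lemma Rf_val {h : ℕ} (a : NV h) : (Rf h a : ℕ) = rnat a := rfl

lemma Lf_ne_root {h : ℕ} (a : NV h) : Lf h a ≠ root (h+1) := by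
  intro he
  have := congrArg Fin.val he
  simp [root] at this
  have := lnat_pos (a : ℕ); omega

lemma Rf_ne_root {h : ℕ} (a : NV h) : Rf h a ≠ root (h+1) := by
  intro he
  have := congrArg Fin.val he
  simp [root] at this
  have := rnat_pos (a : ℕ); omega

lemma Lf_ne_Rf {h : ℕ} (a b : NV h) : Lf h a ≠ Rf h b := by
  intro he
  exact lnat_ne_rnat a b (congrArg Fin.val he)

lemma trichotomy {h : ℕ} (v : NV (h+1)) :
    v = root (h+1) ∨ (∃ a, v = Lf h a) ∨ (∃ a, v = Rf h a) := by
  by_cases hv : (v : ℕ) = 0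
  · left; exact Fin.ext hv
  · right
    have hv2 : (v : ℕ) < 2 ^ (h+2) - 1 := v.isLt
    rcases lnat_or_rnat (by omega) hv2 with ⟨j, hj, hjv⟩ | ⟨j, hj, hjv⟩
    · left; exact ⟨⟨j, hj⟩, Fin.ext hjv.symm⟩
    · right; exact ⟨⟨j, hj⟩, Fin.ext hjv.symm⟩

lemma adj_Lf_Lf {h : ℕ} (a b : NV h) :
    (perfectBinaryTree (h+1)).Adj (Lf h a) (Lf h b) ↔ (perfectBinaryTree h).Adj a b := by
  rw [adj_iff, adj_iff]
  simp only [Lf_val]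
  constructor
  · rintro (hc | hc | hc | hc)
    · have : lnat b = lnat (2*a+1) := by rw [lnat_left]; omega
      have := lnat_inj this
      have hb : (b:ℕ) = 2*a+1 := this
      tauto
    · have : lnat b = lnat (2*a+2) := by rw [lnat_right]; omega
      have hb : (b:ℕ) = 2*a+2 := lnat_inj this
      tauto
    · have : lnat a = lnat (2*b+1) := by rw [lnat_left]; omega
      have hb : (a:ℕ) = 2*b+1 := lnat_inj this
      tauto
    · have : lnat a = lnat (2*b+2) := by rw [lnat_right]; omega
      have hb : (a:ℕ) = 2*b+2 := lnat_inj this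
      tauto
  · rintro (hc | hc | hc | hc)
    · left; rw [hc, lnat_left]
    · right; left; rw [hc, lnat_right]
    · right; right; left; rw [hc, lnat_left]
    · right; right; right; rw [hc, lnat_right]

lemma adj_Rf_Rf {h : ℕ} (a b : NV h) :
    (perfectBinaryTree (h+1)).Adj (Rf h a) (Rf h b) ↔ (perfectBinaryTree h).Adj a b := by
  rw [adj_iff, adj_iff]
  simp only [Rf_val]
  constructor
  · rintro (hc | hc | hc | hc)
    · have : rnat b = rnat (2*a+1) := by rw [rnat_left]; omega
      have hb : (b:ℕ) = 2*a+1 := rnat_inj this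
      tauto
    · have : rnat b = rnat (2*a+2) := by rw [rnat_right]; omega
      have hb : (b:ℕ) = 2*a+2 := rnat_inj this
      tauto
    · have : rnat a = rnat (2*b+1) := by rw [rnat_left]; omega
      have hb : (a:ℕ) = 2*b+1 := rnat_inj this
      tauto
    · have : rnat a = rnat (2*b+2) := by rw [rnat_right]; omega
      have hb : (a:ℕ) = 2*b+2 := rnat_inj this
      tauto
  · rintro (hc | hc | hc | hc)
    · left; rw [hc, rnat_left]
    · right; left; rw [hc, rnat_right]
    · right; right; left; rw [hc, rnat_left]
    · right; right; right; rw [hc, rnat_right]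

lemma not_adj_Lf_Rf {h : ℕ} (a b : NV h) :
    ¬ (perfectBinaryTree (h+1)).Adj (Lf h a) (Rf h b) := by
  rw [adj_iff]
  simp only [Lf_val, Rf_val]
  rintro (hc | hc | hc | hc)
  · exact lnat_ne_rnat (2*a+1) b (by rw [lnat_left]; omega)
  · exact lnat_ne_rnat (2*a+2) b (by rw [lnat_right]; omega)
  · exact lnat_ne_rnat a (2*b+1) (by rw [rnat_left]; omega)
  · exact lnat_ne_rnat a (2*b+2) (by rw [rnat_right]; omega)

lemma adj_root_Lf {h : ℕ} (a : NV h) :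
    (perfectBinaryTree (h+1)).Adj (root (h+1)) (Lf h a) ↔ a = root h := by
  rw [adj_iff]
  simp only [Lf_val, root, Fin.ext_iff]
  constructor
  · rintro (hc | hc | hc | hc)
    · have : lnat a = lnat 0 := by rw [lnat_zero]; omega
      have := lnat_inj this; simpa using this
    · exfalso; exact lnat_ne_rnat a 0 (by rw [rnat_zero]; omega)
    · have := lnat_pos (a:ℕ); omega
    · have := lnat_pos (a:ℕ); omega
  · intro ha
    left
    have : (a:ℕ) = 0 := ha
    rw [this, lnat_zero]

lemma adj_root_Rf {h : ℕ} (a : NV h) :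
    (perfectBinaryTree (h+1)).Adj (root (h+1)) (Rf h a) ↔ a = root h := by
  rw [adj_iff]
  simp only [Rf_val, root, Fin.ext_iff]
  constructor
  · rintro (hc | hc | hc | hc)
    · exfalso; exact lnat_ne_rnat 0 a (by rw [lnat_zero]; omega)
    · have : rnat a = rnat 0 := by rw [rnat_zero]; omega
      have := rnat_inj this; simpa using this
    · have := rnat_pos (a:ℕ); omega
    · have := rnat_pos (a:ℕ); omega
  · intro ha
    right; left
    have : (a:ℕ) = 0 := ha
    rw [this, rnat_zero]


open Finset

/-- v is dominated by S -/
def Dominated (h : ℕ) (S : Finset (NV h)) (v : NV h) : Prop :=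
  v ∈ S ∨ ∃ u ∈ S, (perfectBinaryTree h).Adj u v

def FeasA (h : ℕ) (S : Finset (NV h)) : Prop :=
  (perfectBinaryTree h).IsIndepSet' S ∧ (∀ v, Dominated h S v) ∧ root h ∈ S

def FeasB (h : ℕ) (S : Finset (NV h)) : Prop :=
  (perfectBinaryTree h).IsIndepSet' S ∧ (∀ v, Dominated h S v) ∧ root h ∉ S

def FeasD (h : ℕ) (S : Finset (NV h)) : Prop :=
  (perfectBinaryTree h).IsIndepSet' S ∧ (∀ v, v ≠ root h → Dominated h S v) ∧ root h ∉ S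

noncomputable def costA (h : ℕ) : ℕ∞ := ⨅ S : {S : Finset (NV h) // FeasA h S}, (S.1.card : ℕ∞)
noncomputable def costB (h : ℕ) : ℕ∞ := ⨅ S : {S : Finset (NV h) // FeasB h S}, (S.1.card : ℕ∞)
noncomputable def costD (h : ℕ) : ℕ∞ := ⨅ S : {S : Finset (NV h) // FeasD h S}, (S.1.card : ℕ∞)

lemma iInf_attained {ι : Sort*} (f : ι → ℕ∞) (hne : ⨅ i, f i ≠ ⊤) :
    ∃ i, f i = ⨅ i, f i := by
  by_contra hc
  push_neg at hc
  have hlb : (⨅ i, f i) + 1 ≤ ⨅ i, f i := by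
    apply le_iInf
    intro i
    exact (ENat.add_one_le_iff hne).mpr (lt_of_le_of_ne (iInf_le f i) (Ne.symm (hc i)))
  have : (⨅ i, f i) < (⨅ i, f i) + 1 := by
    apply (ENat.add_one_le_iff hne).mp le_rfl
  exact absurd (lt_of_lt_of_le this hlb) (lt_irrefl _)

-- base cases
lemma subsingleton_nv0 (v w : NV 0) : v = w := by
  have hv := v.isLt; have hw := w.isLt
  apply Fin.ext; omega

lemma costA_zero : costA 0 = 1 := by
  apply le_antisymm
  · have hfeas : FeasA 0 {root 0} := by
      refine ⟨?_, ?_, by simp⟩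
      · intro u hu v hv hadj
        rw [subsingleton_nv0 u v] at hadj
        exact (perfectBinaryTree 0).irrefl hadj
      · intro v
        left
        rw [subsingleton_nv0 v (root 0)]; simp
    calc costA 0 ≤ (({root 0} : Finset (NV 0)).card : ℕ∞) := iInf_le (fun S : {S : Finset (NV 0) // FeasA 0 S} => (S.1.card : ℕ∞)) ⟨{root 0}, hfeas⟩
    _ = 1 := by simp
  · apply le_iInf
    intro ⟨S, hS⟩
    have : S.Nonempty := ⟨root 0, hS.2.2⟩
    have h1 : 1 ≤ S.card := Finset.card_pos.mpr this
    exact_mod_cast h1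

lemma costB_zero : costB 0 = ⊤ := by
  rw [costB, iInf_eq_top]
  rintro ⟨S, hind, hdom, hroot⟩
  exfalso
  rcases hdom (root 0) with hmem | ⟨u, hu, hadj⟩
  · exact hroot hmem
  · rw [subsingleton_nv0 u (root 0)] at hadj
    exact (perfectBinaryTree 0).irrefl hadj

lemma costD_zero : costD 0 = 0 := by
  have hfeas : FeasD 0 ∅ := by
    refine ⟨by intro u hu; simp at hu, ?_, by simp⟩
    intro v hv
    exact absurd (subsingleton_nv0 v (root 0)) hv
  have := iInf_le (fun S : {S : Finset (NV 0) // FeasD 0 S} => (S.1.card : ℕ∞)) ⟨∅, hfeas⟩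
  simpa [costD] using this

-- combination of two subtree sets plus optional root
noncomputable def comb (h : ℕ) (c : Prop) [Decidable c] (S₁ S₂ : Finset (NV h)) :
    Finset (NV (h+1)) :=
  (if c then {root (h+1)} else ∅) ∪ S₁.map (Lf h) ∪ S₂.map (Rf h)

lemma mem_comb {h : ℕ} {c : Prop} [Decidable c] {S₁ S₂ : Finset (NV h)} {v : NV (h+1)} :
    v ∈ comb h c S₁ S₂ ↔ (c ∧ v = root (h+1)) ∨ (∃ a ∈ S₁, Lf h a = v) ∨ ∃ a ∈ S₂, Rf h a = v := by
  unfold comb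
  by_cases hc : c <;> simp [hc, Finset.mem_union, Finset.mem_map]

lemma root_mem_comb {h : ℕ} {c : Prop} [Decidable c] {S₁ S₂ : Finset (NV h)} :
    root (h+1) ∈ comb h c S₁ S₂ ↔ c := by
  rw [mem_comb]
  constructor
  · rintro (⟨hc, _⟩ | ⟨a, _, ha⟩ | ⟨a, _, ha⟩)
    · exact hc
    · exact absurd ha (Lf_ne_root a)
    · exact absurd ha (Rf_ne_root a)
  · intro hc; exact Or.inl ⟨hc, rfl⟩

lemma Lf_mem_comb {h : ℕ} {c : Prop} [Decidable c] {S₁ S₂ : Finset (NV h)} {a : NV h} :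
    Lf h a ∈ comb h c S₁ S₂ ↔ a ∈ S₁ := by
  rw [mem_comb]
  constructor
  · rintro (⟨_, hc⟩ | ⟨b, hb, hba⟩ | ⟨b, hb, hba⟩)
    · exact absurd hc (Lf_ne_root a)
    · rwa [← (Lf h).injective hba]
    · exact absurd hba.symm (Lf_ne_Rf a b)
  · intro ha; exact Or.inr (Or.inl ⟨a, ha, rfl⟩)

lemma Rf_mem_comb {h : ℕ} {c : Prop} [Decidable c] {S₁ S₂ : Finset (NV h)} {a : NV h} :
    Rf h a ∈ comb h c S₁ S₂ ↔ a ∈ S₂ := by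
  rw [mem_comb]
  constructor
  · rintro (⟨_, hc⟩ | ⟨b, hb, hba⟩ | ⟨b, hb, hba⟩)
    · exact absurd hc (Rf_ne_root a)
    · exact absurd hba (Lf_ne_Rf b a)
    · rwa [← (Rf h).injective hba]
  · intro ha; exact Or.inr (Or.inr ⟨a, ha, rfl⟩)

lemma card_comb (h : ℕ) (c : Prop) [Decidable c] (S₁ S₂ : Finset (NV h)) :
    (comb h c S₁ S₂).card = (if c then 1 else 0) + S₁.card + S₂.card := by
  unfold comb
  rw [Finset.card_union_of_disjoint, Finset.card_union_of_disjoint]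
  · rw [Finset.card_map, Finset.card_map]
    split_ifs <;> simp
  · rw [Finset.disjoint_left]
    intro v hv hv2
    rw [Finset.mem_map] at hv2
    obtain ⟨a, _, ha⟩ := hv2
    split_ifs at hv with hc
    · rw [Finset.mem_singleton] at hv
      exact Lf_ne_root a (by rw [ha, hv])
    · simp at hv
  · rw [Finset.disjoint_left]
    intro v hv hv2
    rw [Finset.mem_map] at hv2
    obtain ⟨b, _, hb⟩ := hv2
    rw [Finset.mem_union] at hv
    rcases hv with hv | hv
    · split_ifs at hv with hc
      · rw [Finset.mem_singleton] at hv
        exact Rf_ne_root b (by rw [hb, hv])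
      · simp at hv
    · rw [Finset.mem_map] at hv
      obtain ⟨a, _, ha⟩ := hv
      exact Lf_ne_Rf a b (by rw [ha, hb])

lemma indep_comb {h : ℕ} {c : Prop} [Decidable c] {S₁ S₂ : Finset (NV h)}
    (hroot : c → root h ∉ S₁ ∧ root h ∉ S₂)
    (h₁ : (perfectBinaryTree h).IsIndepSet' S₁) (h₂ : (perfectBinaryTree h).IsIndepSet' S₂) :
    (perfectBinaryTree (h+1)).IsIndepSet' (comb h c S₁ S₂) := by
  intro u hu v hv hadj
  rw [mem_comb] at hu hv
  rcases hu with ⟨hc, rfl⟩ | ⟨a, ha, rfl⟩ | ⟨a, ha, rfl⟩ <;>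
    rcases hv with ⟨hc', rfl⟩ | ⟨b, hb, rfl⟩ | ⟨b, hb, rfl⟩
  · exact (perfectBinaryTree (h+1)).irrefl hadj
  · rw [adj_root_Lf] at hadj; subst hadj; exact (hroot hc).1 hb
  · rw [adj_root_Rf] at hadj; subst hadj; exact (hroot hc).2 hb
  · exact (hroot hc').1 (((adj_root_Lf a).mp hadj.symm) ▸ ha)
  · rw [adj_Lf_Lf] at hadj; exact h₁ a ha b hb hadj
  · exact not_adj_Lf_Rf a b hadj
  · exact (hroot hc').2 (((adj_root_Rf a).mp hadj.symm) ▸ ha)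
  · exact not_adj_Lf_Rf b a hadj.symm
  · rw [adj_Rf_Rf] at hadj; exact h₂ a ha b hb hadj

lemma dominated_comb_L {h : ℕ} {c : Prop} [Decidable c] {S₁ S₂ : Finset (NV h)} {a : NV h}
    (hd : Dominated h S₁ a) : Dominated (h+1) (comb h c S₁ S₂) (Lf h a) := by
  rcases hd with hmem | ⟨u, hu, hadj⟩
  · exact Or.inl (Lf_mem_comb.mpr hmem)
  · exact Or.inr ⟨Lf h u, Lf_mem_comb.mpr hu, (adj_Lf_Lf u a).mpr hadj⟩

lemma dominated_comb_R {h : ℕ} {c : Prop} [Decidable c] {S₁ S₂ : Finset (NV h)} {a : NV h}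
    (hd : Dominated h S₂ a) : Dominated (h+1) (comb h c S₁ S₂) (Rf h a) := by
  rcases hd with hmem | ⟨u, hu, hadj⟩
  · exact Or.inl (Rf_mem_comb.mpr hmem)
  · exact Or.inr ⟨Rf h u, Rf_mem_comb.mpr hu, (adj_Rf_Rf u a).mpr hadj⟩

-- decomposition
noncomputable def SL {h : ℕ} (S : Finset (NV (h+1))) : Finset (NV h) :=
  S.preimage (Lf h) ((Lf h).injective.injOn)

noncomputable def SR {h : ℕ} (S : Finset (NV (h+1))) : Finset (NV h) :=
  S.preimage (Rf h) ((Rf h).injective.injOn)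

lemma mem_SL {h : ℕ} {S : Finset (NV (h+1))} {a : NV h} : a ∈ SL S ↔ Lf h a ∈ S :=
  Finset.mem_preimage

lemma mem_SR {h : ℕ} {S : Finset (NV (h+1))} {a : NV h} : a ∈ SR S ↔ Rf h a ∈ S :=
  Finset.mem_preimage

lemma decomp_eq {h : ℕ} (S : Finset (NV (h+1))) :
    S = comb h (root (h+1) ∈ S) (SL S) (SR S) := by
  ext v
  rw [mem_comb]
  constructor
  · intro hv
    rcases trichotomy v with rfl | ⟨a, rfl⟩ | ⟨a, rfl⟩
    · exact Or.inl ⟨hv, rfl⟩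
    · exact Or.inr (Or.inl ⟨a, mem_SL.mpr hv, rfl⟩)
    · exact Or.inr (Or.inr ⟨a, mem_SR.mpr hv, rfl⟩)
  · rintro (⟨hc, rfl⟩ | ⟨a, ha, rfl⟩ | ⟨a, ha, rfl⟩)
    · exact hc
    · exact mem_SL.mp ha
    · exact mem_SR.mp ha

lemma card_decomp {h : ℕ} (S : Finset (NV (h+1))) :
    S.card = (if root (h+1) ∈ S then 1 else 0) + (SL S).card + (SR S).card := by
  conv_lhs => rw [decomp_eq S]
  exact card_comb h _ _ _

lemma indep_SL {h : ℕ} {S : Finset (NV (h+1))}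
    (hind : (perfectBinaryTree (h+1)).IsIndepSet' S) :
    (perfectBinaryTree h).IsIndepSet' (SL S) := by
  intro u hu v hv hadj
  exact hind _ (mem_SL.mp hu) _ (mem_SL.mp hv) ((adj_Lf_Lf u v).mpr hadj)

lemma indep_SR {h : ℕ} {S : Finset (NV (h+1))}
    (hind : (perfectBinaryTree (h+1)).IsIndepSet' S) :
    (perfectBinaryTree h).IsIndepSet' (SR S) := by
  intro u hu v hv hadj
  exact hind _ (mem_SR.mp hu) _ (mem_SR.mp hv) ((adj_Rf_Rf u v).mpr hadj)

lemma dominated_decomp_L {h : ℕ} {S : Finset (NV (h+1))} {a : NV h}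
    (hd : Dominated (h+1) S (Lf h a)) :
    (a = root h ∧ root (h+1) ∈ S) ∨ Dominated h (SL S) a := by
  rcases hd with hmem | ⟨u, hu, hadj⟩
  · exact Or.inr (Or.inl (mem_SL.mpr hmem))
  · rcases trichotomy u with rfl | ⟨b, rfl⟩ | ⟨b, rfl⟩
    · exact Or.inl ⟨(adj_root_Lf a).mp hadj, hu⟩
    · exact Or.inr (Or.inr ⟨b, mem_SL.mpr hu, (adj_Lf_Lf b a).mp hadj⟩)
    · exact absurd hadj.symm (not_adj_Lf_Rf a b)

lemma dominated_decomp_R {h : ℕ} {S : Finset (NV (h+1))} {a : NV h}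
    (hd : Dominated (h+1) S (Rf h a)) :
    (a = root h ∧ root (h+1) ∈ S) ∨ Dominated h (SR S) a := by
  rcases hd with hmem | ⟨u, hu, hadj⟩
  · exact Or.inr (Or.inl (mem_SR.mpr hmem))
  · rcases trichotomy u with rfl | ⟨b, rfl⟩ | ⟨b, rfl⟩
    · exact Or.inl ⟨(adj_root_Rf a).mp hadj, hu⟩
    · exact absurd hadj (not_adj_Lf_Rf b a)
    · exact Or.inr (Or.inr ⟨b, mem_SR.mpr hu, (adj_Rf_Rf b a).mp hadj⟩)

lemma dominated_root_iff {h : ℕ} (S : Finset (NV (h+1))) :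
    Dominated (h+1) S (root (h+1)) ↔
      root (h+1) ∈ S ∨ Lf h (root h) ∈ S ∨ Rf h (root h) ∈ S := by
  constructor
  · rintro (hmem | ⟨u, hu, hadj⟩)
    · exact Or.inl hmem
    · rcases trichotomy u with rfl | ⟨b, rfl⟩ | ⟨b, rfl⟩
      · exact absurd hadj ((perfectBinaryTree (h+1)).irrefl)
      · rw [(adj_root_Lf b).mp hadj.symm] at hu
        exact Or.inr (Or.inl hu)
      · rw [(adj_root_Rf b).mp hadj.symm] at hu
        exact Or.inr (Or.inr hu)
  · rintro (hmem | hmem | hmem)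
    · exact Or.inl hmem
    · exact Or.inr ⟨_, hmem, ((adj_root_Lf (root h)).mpr rfl).symm⟩
    · exact Or.inr ⟨_, hmem, ((adj_root_Rf (root h)).mpr rfl).symm⟩


lemma costA_le {h : ℕ} {S : Finset (NV h)} (hS : FeasA h S) : costA h ≤ (S.card : ℕ∞) :=
  iInf_le _ (⟨S, hS⟩ : {S : Finset (NV h) // FeasA h S})

lemma costB_le {h : ℕ} {S : Finset (NV h)} (hS : FeasB h S) : costB h ≤ (S.card : ℕ∞) :=
  iInf_le _ (⟨S, hS⟩ : {S : Finset (NV h) // FeasB h S})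

lemma costD_le {h : ℕ} {S : Finset (NV h)} (hS : FeasD h S) : costD h ≤ (S.card : ℕ∞) :=
  iInf_le _ (⟨S, hS⟩ : {S : Finset (NV h) // FeasD h S})

lemma costA_attained {h : ℕ} (hne : costA h ≠ ⊤) :
    ∃ S : Finset (NV h), FeasA h S ∧ (S.card : ℕ∞) = costA h := by
  obtain ⟨S, hS⟩ := iInf_attained _ hne
  exact ⟨S.1, S.2, hS⟩

lemma costB_attained {h : ℕ} (hne : costB h ≠ ⊤) :
    ∃ S : Finset (NV h), FeasB h S ∧ (S.card : ℕ∞) = costB h := by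
  obtain ⟨S, hS⟩ := iInf_attained _ hne
  exact ⟨S.1, S.2, hS⟩

lemma costD_attained {h : ℕ} (hne : costD h ≠ ⊤) :
    ∃ S : Finset (NV h), FeasD h S ∧ (S.card : ℕ∞) = costD h := by
  obtain ⟨S, hS⟩ := iInf_attained _ hne
  exact ⟨S.1, S.2, hS⟩

lemma costA_succ (h : ℕ) : costA (h+1) = 1 + costD h + costD h := by
  apply le_antisymm
  · by_cases hD : costD h = ⊤
    · rw [hD]
      simp
    obtain ⟨S₁, hfeas, hcard⟩ := costD_attained hD
    have hTfeas : FeasA (h+1) (comb h True S₁ S₁) := by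
      refine ⟨indep_comb (fun _ => ⟨hfeas.2.2, hfeas.2.2⟩) hfeas.1 hfeas.1, ?_, 
        root_mem_comb.mpr trivial⟩
      intro v
      rcases trichotomy v with rfl | ⟨a, rfl⟩ | ⟨a, rfl⟩
      · exact Or.inl (root_mem_comb.mpr trivial)
      · by_cases ha : a = root h
        · subst ha
          exact Or.inr ⟨root (h+1), root_mem_comb.mpr trivial, (adj_root_Lf _).mpr rfl⟩
        · exact dominated_comb_L (hfeas.2.1 a ha)
      · by_cases ha : a = root h
        · subst ha
          exact Or.inr ⟨root (h+1), root_mem_comb.mpr trivial, (adj_root_Rf _).mpr rfl⟩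
        · exact dominated_comb_R (hfeas.2.1 a ha)
    calc costA (h+1) ≤ ((comb h True S₁ S₁).card : ℕ∞) := costA_le hTfeas
    _ = 1 + costD h + costD h := by
        rw [card_comb, if_pos trivial]
        push_cast
        rw [hcard]
  · apply le_iInf
    rintro ⟨S, hind, hdom, hroot⟩
    have hL : FeasD h (SL S) := by
      refine ⟨indep_SL hind, ?_, ?_⟩
      · intro a ha
        rcases dominated_decomp_L (hdom (Lf h a)) with ⟨ha', _⟩ | hd
        · exact absurd ha' ha
        · exact hd
      · intro hmem
        exact hind _ hroot _ (mem_SL.mp hmem) ((adj_root_Lf _).mpr rfl)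
    have hR : FeasD h (SR S) := by
      refine ⟨indep_SR hind, ?_, ?_⟩
      · intro a ha
        rcases dominated_decomp_R (hdom (Rf h a)) with ⟨ha', _⟩ | hd
        · exact absurd ha' ha
        · exact hd
      · intro hmem
        exact hind _ hroot _ (mem_SR.mp hmem) ((adj_root_Rf _).mpr rfl)
    have hc := card_decomp S
    rw [if_pos hroot] at hc
    show 1 + costD h + costD h ≤ ((S.card : ℕ) : ℕ∞)
    rw [hc]
    push_cast
    gcongr
    · exact costD_le hL
    · exact costD_le hR

lemma costB_succ (h : ℕ) : costB (h+1) = costA h + min (costA h) (costB h) := by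
  apply le_antisymm
  · by_cases hA : costA h = ⊤
    · rw [hA]
      simp
    obtain ⟨S₁, hfeas₁, hcard₁⟩ := costA_attained hA
    rcases le_total (costA h) (costB h) with hAB | hAB
    · rw [min_eq_left hAB]
      have hTfeas : FeasB (h+1) (comb h False S₁ S₁) := by
        refine ⟨indep_comb (fun hc => hc.elim) hfeas₁.1 hfeas₁.1, ?_, ?_⟩
        · intro v
          rcases trichotomy v with rfl | ⟨a, rfl⟩ | ⟨a, rfl⟩
          · exact Or.inr ⟨Lf h (root h), Lf_mem_comb.mpr hfeas₁.2.2,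
              ((adj_root_Lf _).mpr rfl).symm⟩
          · exact dominated_comb_L (hfeas₁.2.1 a)
          · exact dominated_comb_R (hfeas₁.2.1 a)
        · rw [root_mem_comb]; exact not_false
      calc costB (h+1) ≤ ((comb h False S₁ S₁).card : ℕ∞) := costB_le hTfeas
      _ = costA h + costA h := by
          rw [card_comb, if_neg not_false]
          push_cast
          rw [hcard₁]
          simp
    · rw [min_eq_right hAB]
      have hB : costB h ≠ ⊤ := fun hc => hA (top_le_iff.mp (hc ▸ hAB))
      obtain ⟨S₂, hfeas₂, hcard₂⟩ := costB_attained hB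
      have hTfeas : FeasB (h+1) (comb h False S₁ S₂) := by
        refine ⟨indep_comb (fun hc => hc.elim) hfeas₁.1 hfeas₂.1, ?_, ?_⟩
        · intro v
          rcases trichotomy v with rfl | ⟨a, rfl⟩ | ⟨a, rfl⟩
          · exact Or.inr ⟨Lf h (root h), Lf_mem_comb.mpr hfeas₁.2.2,
              ((adj_root_Lf _).mpr rfl).symm⟩
          · exact dominated_comb_L (hfeas₁.2.1 a)
          · exact dominated_comb_R (hfeas₂.2.1 a)
        · rw [root_mem_comb]; exact not_false
      calc costB (h+1) ≤ ((comb h False S₁ S₂).card : ℕ∞) := costB_le hTfeas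
      _ = costA h + costB h := by
          rw [card_comb, if_neg not_false]
          push_cast
          rw [hcard₁, hcard₂]
          simp
  · apply le_iInf
    rintro ⟨S, hind, hdom, hroot⟩
    have hdomL : ∀ a, Dominated h (SL S) a := by
      intro a
      rcases dominated_decomp_L (hdom (Lf h a)) with ⟨_, hmem⟩ | hd
      · exact absurd hmem hroot
      · exact hd
    have hdomR : ∀ a, Dominated h (SR S) a := by
      intro a
      rcases dominated_decomp_R (hdom (Rf h a)) with ⟨_, hmem⟩ | hd
      · exact absurd hmem hroot
      · exact hd
    have hc := card_decomp S
    rw [if_neg hroot] at hc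
    have hminL : min (costA h) (costB h) ≤ ((SL S).card : ℕ∞) := by
      by_cases hm : root h ∈ SL S
      · exact le_trans (min_le_left _ _) (costA_le ⟨indep_SL hind, hdomL, hm⟩)
      · exact le_trans (min_le_right _ _) (costB_le ⟨indep_SL hind, hdomL, hm⟩)
    have hminR : min (costA h) (costB h) ≤ ((SR S).card : ℕ∞) := by
      by_cases hm : root h ∈ SR S
      · exact le_trans (min_le_left _ _) (costA_le ⟨indep_SR hind, hdomR, hm⟩)
      · exact le_trans (min_le_right _ _) (costB_le ⟨indep_SR hind, hdomR, hm⟩)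
    rcases (dominated_root_iff S).mp (hdom (root (h+1))) with hmem | hmem | hmem
    · exact absurd hmem hroot
    · -- left subtree root in S : SL is FeasA
      have hLA : FeasA h (SL S) := ⟨indep_SL hind, hdomL, mem_SL.mpr hmem⟩
      show costA h + min (costA h) (costB h) ≤ ((S.card : ℕ) : ℕ∞)
      rw [hc]
      push_cast
      simp only [zero_add]
      exact add_le_add (costA_le hLA) hminR
    · have hRA : FeasA h (SR S) := ⟨indep_SR hind, hdomR, mem_SR.mpr hmem⟩
      show costA h + min (costA h) (costB h) ≤ ((S.card : ℕ) : ℕ∞)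
      rw [hc]
      push_cast
      simp only [zero_add]
      rw [add_comm (((SL S).card : ℕ∞)) _]
      exact add_le_add (costA_le hRA) hminL

lemma costD_succ (h : ℕ) : costD (h+1) = min (costB (h+1)) (costB h + costB h) := by
  apply le_antisymm
  · apply le_min
    · apply le_iInf
      rintro ⟨S, hind, hdom, hroot⟩
      exact costD_le ⟨hind, fun v _ => hdom v, hroot⟩
    · by_cases hB : costB h = ⊤
      · rw [hB]; simp
      obtain ⟨S₁, hfeas₁, hcard₁⟩ := costB_attained hB
      have hTfeas : FeasD (h+1) (comb h False S₁ S₁) := by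
        refine ⟨indep_comb (fun hc => hc.elim) hfeas₁.1 hfeas₁.1, ?_, ?_⟩
        · intro v hv
          rcases trichotomy v with rfl | ⟨a, rfl⟩ | ⟨a, rfl⟩
          · exact absurd rfl hv
          · exact dominated_comb_L (hfeas₁.2.1 a)
          · exact dominated_comb_R (hfeas₁.2.1 a)
        · rw [root_mem_comb]; exact not_false
      calc costD (h+1) ≤ ((comb h False S₁ S₁).card : ℕ∞) := costD_le hTfeas
      _ = costB h + costB h := by
          rw [card_comb, if_neg not_false]
          push_cast
          rw [hcard₁]
          simp
  · apply le_iInf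
    rintro ⟨S, hind, hdom, hroot⟩
    by_cases hdr : Dominated (h+1) S (root (h+1))
    · have hBfeas : FeasB (h+1) S := by
        refine ⟨hind, ?_, hroot⟩
        intro v
        by_cases hv : v = root (h+1)
        · exact hv ▸ hdr
        · exact hdom v hv
      exact le_trans (min_le_left _ _) (costB_le hBfeas)
    · rw [dominated_root_iff] at hdr
      push_neg at hdr
      obtain ⟨_, hdl, hdrr⟩ := hdr
      have hLB : FeasB h (SL S) := by
        refine ⟨indep_SL hind, ?_, fun hmem => hdl (mem_SL.mp hmem)⟩
        intro a
        rcases dominated_decomp_L (hdom (Lf h a) (Lf_ne_root a)) with ⟨_, hmem⟩ | hd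
        · exact absurd hmem hroot
        · exact hd
      have hRB : FeasB h (SR S) := by
        refine ⟨indep_SR hind, ?_, fun hmem => hdrr (mem_SR.mp hmem)⟩
        intro a
        rcases dominated_decomp_R (hdom (Rf h a) (Rf_ne_root a)) with ⟨_, hmem⟩ | hd
        · exact absurd hmem hroot
        · exact hd
      have hc := card_decomp S
      rw [if_neg hroot] at hc
      refine le_trans (min_le_right _ _) ?_
      show costB h + costB h ≤ ((S.card : ℕ) : ℕ∞)
      rw [hc]
      push_cast
      simp only [zero_add]
      gcongr
      · exact costB_le hLB
      · exact costB_le hRB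


/-- the claimed answer -/
def nN : ℕ → ℕ
  | 0 => 1
  | (m+1) => 8 * nN m + 1

lemma seven_nN (m : ℕ) : 7 * nN m = 8 ^ (m+1) - 1 := by
  induction m with
  | zero => simp [nN]
  | succ m ih =>
    have h1 : (1:ℕ) ≤ 8 ^ (m+1) := Nat.one_le_pow _ _ (by norm_num)
    have h2 : (8:ℕ) ^ (m+1+1) = 8 * 8 ^ (m+1) := by ring
    simp only [nN]
    omega

lemma invariant (m : ℕ) :
    costA (3*m+1) = ((nN m : ℕ) : ℕ∞) ∧ costB (3*m+1) = ((nN m + 1 : ℕ) : ℕ∞) ∧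
      costD (3*m+1) = ((nN m + 1 : ℕ) : ℕ∞) := by
  induction m with
  | zero =>
    have hA := costA_succ 0
    rw [costD_zero] at hA
    norm_num at hA
    have hB := costB_succ 0
    rw [costA_zero, costB_zero, min_eq_left le_top] at hB
    norm_num at hB
    have hD := costD_succ 0
    rw [costB_zero, hB, add_top, min_eq_left le_top] at hD
    norm_num at hD
    show costA 1 = _ ∧ costB 1 = _ ∧ costD 1 = _
    rw [hA, hB, hD]
    norm_num [nN]
  | succ m ih =>
    obtain ⟨hA, hB, hD⟩ := ih
    set k := 3*m+1 with hk
    set n := nN m with hn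
    have hA1 : costA (k+1) = ((2*n+3 : ℕ) : ℕ∞) := by
      rw [costA_succ, hD]; push_cast; ring
    have hB1 : costB (k+1) = ((2*n : ℕ) : ℕ∞) := by
      rw [costB_succ, hA, hB,
        min_eq_left (by exact_mod_cast Nat.le_succ n : ((n:ℕ):ℕ∞) ≤ ((n+1:ℕ):ℕ∞))]
      push_cast; ring
    have hD1 : costD (k+1) = ((2*n : ℕ) : ℕ∞) := by
      rw [costD_succ, hB1, hB]
      have : (((n+1 : ℕ)) : ℕ∞) + ((n+1 : ℕ) : ℕ∞) = ((2*n+2 : ℕ) : ℕ∞) := by push_cast; ring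
      rw [this, min_eq_left (by exact_mod_cast (by omega : 2*n ≤ 2*n+2))]
    have hA2 : costA (k+2) = ((4*n+1 : ℕ) : ℕ∞) := by
      rw [show k+2 = (k+1)+1 from rfl, costA_succ, hD1]; push_cast; ring
    have hB2 : costB (k+2) = ((4*n+3 : ℕ) : ℕ∞) := by
      rw [show k+2 = (k+1)+1 from rfl, costB_succ, hA1, hB1,
        min_eq_right (by exact_mod_cast (by omega : 2*n ≤ 2*n+3))]
      push_cast; ring
    have hD2 : costD (k+2) = ((4*n : ℕ) : ℕ∞) := by
      rw [show k+2 = (k+1)+1 from rfl, costD_succ, hB2, hB1]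
      have : (((2*n : ℕ)) : ℕ∞) + ((2*n : ℕ) : ℕ∞) = ((4*n : ℕ) : ℕ∞) := by push_cast; ring
      rw [this, min_eq_right (by exact_mod_cast (by omega : 4*n ≤ 4*n+3))]
    have hA3 : costA (k+3) = ((8*n+1 : ℕ) : ℕ∞) := by
      rw [show k+3 = (k+2)+1 from rfl, costA_succ, hD2]; push_cast; ring
    have hB3 : costB (k+3) = ((8*n+2 : ℕ) : ℕ∞) := by
      rw [show k+3 = (k+2)+1 from rfl, costB_succ, hA2, hB2,
        min_eq_left (by exact_mod_cast (by omega : 4*n+1 ≤ 4*n+3))]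
      push_cast; ring
    have hD3 : costD (k+3) = ((8*n+2 : ℕ) : ℕ∞) := by
      rw [show k+3 = (k+2)+1 from rfl, costD_succ, hB3, hB2]
      have : (((4*n+3 : ℕ)) : ℕ∞) + ((4*n+3 : ℕ) : ℕ∞) = ((8*n+6 : ℕ) : ℕ∞) := by
        push_cast; ring
      rw [this, min_eq_left (by exact_mod_cast (by omega : 8*n+2 ≤ 8*n+6))]
    have hidx : 3*(m+1)+1 = k+3 := by rw [hk]; ring
    have hval : nN (m+1) = 8*n+1 := by simp [nN, hn]
    rw [hidx, hval]
    have he : 8*n+1+1 = 8*n+2 := by omega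
    rw [he]
    exact ⟨hA3, hB3, hD3⟩

lemma mis_iff {h : ℕ} (W : Finset (NV h)) :
    (perfectBinaryTree h).IsMaximalIndepSet W ↔
      (perfectBinaryTree h).IsIndepSet' W ∧ ∀ v, Dominated h W v := by
  constructor
  · rintro ⟨hind, hmax⟩
    refine ⟨hind, ?_⟩
    intro v
    by_contra hnd
    rw [Dominated] at hnd
    push_neg at hnd
    obtain ⟨hvW, hnb⟩ := hnd
    apply hmax (insert v W) (Finset.ssubset_insert hvW)
    intro u hu w hw hadj
    rcases Finset.mem_insert.mp hu with rfl | hu' <;>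
      rcases Finset.mem_insert.mp hw with rfl | hw'
    · exact (perfectBinaryTree h).irrefl hadj
    · exact hnb w hw' hadj.symm
    · exact hnb u hu' hadj
    · exact hind u hu' w hw' hadj
  · rintro ⟨hind, hdom⟩
    refine ⟨hind, ?_⟩
    intro D hWD hindD
    obtain ⟨v, hvD, hvW⟩ := Finset.exists_of_ssubset hWD
    rcases hdom v with hmem | ⟨u, hu, hadj⟩
    · exact hvW hmem
    · exact hindD u (hWD.subset hu) v hvD hadj

lemma min_mis (m : ℕ) :
    (perfectBinaryTree (3*m+1)).minMaximalIndepSetSize = nN m := by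
  obtain ⟨hA, hB, _⟩ := invariant m
  have hAne : costA (3*m+1) ≠ ⊤ := by rw [hA]; exact ENat.coe_ne_top _
  obtain ⟨S, hfeas, hcard⟩ := costA_attained hAne
  have hmem : nN m ∈ {k | ∃ W : Finset (NV (3*m+1)),
      (perfectBinaryTree (3*m+1)).IsMaximalIndepSet W ∧ W.card = k} := by
    refine ⟨S, (mis_iff S).mpr ⟨hfeas.1, hfeas.2.1⟩, ?_⟩
    have : (S.card : ℕ∞) = ((nN m : ℕ) : ℕ∞) := by rw [hcard, hA]
    exact_mod_cast this
  have hlb : ∀ k ∈ {k | ∃ W : Finset (NV (3*m+1)),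
      (perfectBinaryTree (3*m+1)).IsMaximalIndepSet W ∧ W.card = k}, nN m ≤ k := by
    rintro k ⟨W, hW, rfl⟩
    obtain ⟨hind, hdom⟩ := (mis_iff W).mp hW
    by_cases hr : root (3*m+1) ∈ W
    · have := costA_le ⟨hind, hdom, hr⟩
      rw [hA] at this
      exact_mod_cast this
    · have := costB_le ⟨hind, hdom, hr⟩
      rw [hB] at this
      have h2 : (nN m + 1 : ℕ) ≤ W.card := by exact_mod_cast this
      omega
  exact le_antisymm (Nat.sInf_le hmem) (le_csInf ⟨_, hmem⟩ hlb)

end PBTaux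

/-- For a perfect binary tree of height h = 3m+1, the minimum size of a
maximal independent set is (8^(m+1) - 1)/7. -/
theorem minMaximalIndepSetSize_perfectBinaryTree_height_three_mul_add_one (m : ℕ) :
    7 * (perfectBinaryTree (3 * m + 1)).minMaximalIndepSetSize = 8 ^ (m + 1) - 1 := by
  rw [PBTaux.min_mis m, PBTaux.seven_nN m]
end
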